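/- For every n ≥ 2, the Lucas atom P_n(s,t) has nonnegative integer coefficients. -/

import Mathlib

open MvPolynomial

section LucasAux
open Finset Polynomial


-- weight additivity
lemma wt_mul {F G : MvPolynomial (Fin 2) ℝ} {a b : ℕ}
    (hF : ∀ m, F.coeff m ≠ 0 → m 0 + 2 * m 1 = a)
    (hG : ∀ m, G.coeff m ≠ 0 → m 0 + 2 * m 1 = b) :
    ∀ m, (F * G).coeff m ≠ 0 → m 0 + 2 * m 1 = a + b := by
  intro m hm
  rw [MvPolynomial.coeff_mul] at hm
  obtain ⟨p, hp, hne⟩ := Finset.exists_ne_zero_of_sum_ne_zero hm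
  have h1 := hF _ (left_ne_zero_of_mul hne)
  have h2 := hG _ (right_ne_zero_of_mul hne)
  have hsum : p.1 + p.2 = m := Finset.HasAntidiagonal.mem_antidiagonal.mp hp
  have e0 : p.1 0 + p.2 0 = m 0 := by rw [← hsum]; simp
  have e1 : p.1 1 + p.2 1 = m 1 := by rw [← hsum]; simp
  omega

lemma wt_prod {ι : Type*} (s : Finset ι) (f : ι → MvPolynomial (Fin 2) ℝ)
    (hf : ∀ i ∈ s, ∀ m, (f i).coeff m ≠ 0 → m 0 + 2 * m 1 = 2) :
    ∀ m, (∏ i ∈ s, f i).coeff m ≠ 0 → m 0 + 2 * m 1 = 2 * s.card := by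
  induction s using Finset.cons_induction with
  | empty =>
    intro m hm
    rw [Finset.prod_empty, MvPolynomial.coeff_one] at hm
    split_ifs at hm with h
    · subst h; simp
    · exact absurd rfl hm
  | cons i s hi ih =>
    intro m hm
    rw [Finset.prod_cons] at hm
    have := wt_mul (hf i (Finset.mem_cons_self i s))
      (ih (fun j hj => hf j (Finset.mem_cons_of_mem hj))) m hm
    rw [Finset.card_cons]
    omega

lemma nonneg_prod {ι : Type*} (s : Finset ι) (f : ι → MvPolynomial (Fin 2) ℝ)
    (hf : ∀ i ∈ s, ∀ m, 0 ≤ (f i).coeff m) :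
    ∀ m, 0 ≤ (∏ i ∈ s, f i).coeff m := by
  induction s using Finset.cons_induction with
  | empty =>
    intro m
    simp only [Finset.prod_empty, MvPolynomial.coeff_one]
    split_ifs <;> norm_num
  | cons i s hi ih =>
    intro m
    rw [Finset.prod_cons, MvPolynomial.coeff_mul]
    apply Finset.sum_nonneg
    intro p _
    exact mul_nonneg (hf i (Finset.mem_cons_self i s) p.1)
      (ih (fun j hj => hf j (Finset.mem_cons_of_mem hj)) p.2)


lemma term_coeff (c : ℝ) (a b k : ℕ) :
    (Polynomial.C c * ((1 + Polynomial.X) ^ a * (-Polynomial.X : ℝ[X]) ^ b)).coeff k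
    = if b ≤ k then c * (-1) ^ b * ((1 + Polynomial.X : ℝ[X]) ^ a).coeff (k - b) else 0 := by
  have h1 : Polynomial.C c * ((1 + Polynomial.X) ^ a * (-Polynomial.X : ℝ[X]) ^ b)
      = Polynomial.C (c * (-1) ^ b) * ((1 + Polynomial.X) ^ a * Polynomial.X ^ b) := by
    rw [neg_pow]
    simp only [map_mul, map_pow, map_neg, map_one]
    ring
  rw [h1, Polynomial.coeff_C_mul, mul_assoc, Polynomial.coeff_mul_X_pow']
  split_ifs <;> ring

lemma coeff_one_add_X_zero (a : ℕ) : ((1 + Polynomial.X : ℝ[X]) ^ a).coeff 0 = 1 := by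
  rw [Polynomial.coeff_zero_eq_eval_zero]
  simp

lemma inj_lemma (d : ℕ) (R : MvPolynomial (Fin 2) ℝ)
    (hw : ∀ m, R.coeff m ≠ 0 → m 0 + 2 * m 1 = d)
    (hz : MvPolynomial.aeval ![1 + Polynomial.X, (-Polynomial.X : ℝ[X])] R = 0) : R = 0 := by
  by_contra hR
  have hsupp : R.support.Nonempty := MvPolynomial.support_nonempty.mpr hR
  have himg : (R.support.image fun m => m 1).Nonempty := hsupp.image _
  obtain ⟨mstar, hmstar, hmj⟩ := Finset.mem_image.mp
    ((R.support.image fun m => m 1).min'_mem himg)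
  have hmin : ∀ m ∈ R.support, mstar 1 ≤ m 1 := fun m hm =>
    hmj ▸ Finset.min'_le _ _ (Finset.mem_image_of_mem _ hm)
  have hexp : MvPolynomial.aeval ![1 + Polynomial.X, (-Polynomial.X : ℝ[X])] R
      = ∑ m ∈ R.support, Polynomial.C (R.coeff m) *
          ((1 + Polynomial.X) ^ (m 0) * (-Polynomial.X : ℝ[X]) ^ (m 1)) := by
    rw [MvPolynomial.aeval_def, MvPolynomial.eval₂_eq']
    apply Finset.sum_congr rfl
    intro m _
    rw [Fin.prod_univ_two]
    simp
  have hcoeff : (MvPolynomial.aeval ![1 + Polynomial.X, (-Polynomial.X : ℝ[X])] R).coeff (mstar 1)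
      = R.coeff mstar * (-1) ^ (mstar 1) := by
    rw [hexp, Polynomial.finset_sum_coeff, Finset.sum_eq_single mstar]
    · rw [term_coeff, if_pos le_rfl, Nat.sub_self, coeff_one_add_X_zero, mul_one]
    · intro m hm hne
      rw [term_coeff]
      rcases lt_or_eq_of_le (hmin m hm) with hlt | heq
      · rw [if_neg (by omega)]
      · exfalso
        apply hne
        have h1 := hw m (MvPolynomial.mem_support_iff.mp hm)
        have h2 := hw mstar (MvPolynomial.mem_support_iff.mp hmstar)
        have h0 : m 0 = mstar 0 := by omega
        ext i
        fin_cases i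
        · exact h0
        · exact heq.symm
    · intro h; exact absurd hmstar h
  rw [hz, Polynomial.coeff_zero] at hcoeff
  exact mul_ne_zero (MvPolynomial.mem_support_iff.mp hmstar)
    (pow_ne_zero _ (by norm_num)) hcoeff.symm


noncomputable def Sset (n : ℕ) : Finset ℂ := (primitiveRoots n ℂ).filter (fun z => 0 < z.im)

noncomputable def Qbig (n : ℕ) : MvPolynomial (Fin 2) ℝ :=
  ∏ ζ ∈ Sset n, (MvPolynomial.X 0 ^ 2 + MvPolynomial.C (2 + 2 * ζ.re) * MvPolynomial.X 1)

lemma prim_im_ne (n : ℕ) (hn : 3 ≤ n) (z : ℂ) (hz : IsPrimitiveRoot z n) : z.im ≠ 0 := by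
  intro h0
  have habs : ‖z‖ = 1 := hz.norm'_eq_one (by omega)
  have hre : z = (z.re : ℂ) := (Complex.ext_iff).2 ⟨rfl, by simp [h0]⟩
  have : |z.re| = 1 := by rw [hre] at habs; simpa using habs
  have hsq : z ^ 2 = 1 := by
    rcases abs_eq (by norm_num : (0:ℝ) ≤ 1) |>.mp this with h | h <;>
      rw [hre, h] <;> norm_num
  have h2 := Nat.le_of_dvd (by norm_num) (hz.dvd_of_pow_eq_one 2 hsq)
  omega

lemma conj_mem_aux (n : ℕ) (hn : 3 ≤ n) : ∀ a ∈ (primitiveRoots n ℂ).filter (fun z => ¬ 0 < z.im),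
    (starRingEnd ℂ) a ∈ Sset n := by
  have hn0 : 0 < n := by omega
  intro a ha
  simp only [mem_filter, Sset] at ha ⊢
  have hp : IsPrimitiveRoot a n := (mem_primitiveRoots hn0).mp ha.1
  have him := prim_im_ne n hn a hp
  refine ⟨(mem_primitiveRoots hn0).mpr ?_, by
    simp only [Complex.conj_im]
    cases him.lt_or_gt with
    | inl h => simpa using h
    | inr h => exact absurd h ha.2⟩
  simpa using hp.map_of_injective (f := starRingEnd ℂ) (RingHom.injective _)

lemma conj_mem_aux' (n : ℕ) (hn : 3 ≤ n) : ∀ a ∈ Sset n,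
    (starRingEnd ℂ) a ∈ (primitiveRoots n ℂ).filter (fun z => ¬ 0 < z.im) := by
  have hn0 : 0 < n := by omega
  intro a ha
  simp only [mem_filter, Sset] at ha ⊢
  have hp : IsPrimitiveRoot a n := (mem_primitiveRoots hn0).mp ha.1
  refine ⟨(mem_primitiveRoots hn0).mpr ?_, by simp [le_of_lt ha.2]⟩
  simpa using hp.map_of_injective (f := starRingEnd ℂ) (RingHom.injective _)

lemma card_Sset (n : ℕ) (hn : 3 ≤ n) : 2 * (Sset n).card = Nat.totient n := by
  have hn0 : 0 < n := by omega
  have htot : (primitiveRoots n ℂ).card = Nat.totient n :=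
    (Complex.isPrimitiveRoot_exp n hn0.ne').card_primitiveRoots
  have hsplit := Finset.card_filter_add_card_filter_not
    (s := primitiveRoots n ℂ) (p := fun z => 0 < z.im)
  have hbij : ((primitiveRoots n ℂ).filter (fun z => ¬ 0 < z.im)).card = (Sset n).card := by
    apply Finset.card_nbij' (fun z => starRingEnd ℂ z) (fun z => starRingEnd ℂ z)
      (conj_mem_aux n hn) (conj_mem_aux' n hn)
    · intro a _; simp
    · intro a _; simp
  simp only [Sset] at *
  omega

lemma cyclo_pairs (n : ℕ) (hn : 3 ≤ n) :
    cyclotomic n ℂ = ∏ ζ ∈ Sset n, (Polynomial.X ^ 2 - Polynomial.C (2 * (ζ.re : ℂ)) * Polynomial.X + 1) := by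
  have hn0 : 0 < n := by omega
  have hprim : ∀ z ∈ primitiveRoots n ℂ, IsPrimitiveRoot z n := fun z hz =>
    (mem_primitiveRoots hn0).mp hz
  have hbase : cyclotomic n ℂ = ∏ ζ ∈ primitiveRoots n ℂ, (Polynomial.X - Polynomial.C ζ) :=
    cyclotomic_eq_prod_X_sub_primitiveRoots (Complex.isPrimitiveRoot_exp n hn0.ne')
  rw [hbase, ← Finset.prod_filter_mul_prod_filter_not (primitiveRoots n ℂ) (fun z => 0 < z.im)]
  have hneg : ∏ ζ ∈ (primitiveRoots n ℂ).filter (fun z => ¬ 0 < z.im), (Polynomial.X - Polynomial.C ζ)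
      = ∏ ζ ∈ Sset n, (Polynomial.X - Polynomial.C (starRingEnd ℂ ζ)) := by
    apply Finset.prod_nbij' (fun z => starRingEnd ℂ z) (fun z => starRingEnd ℂ z)
      (conj_mem_aux n hn) (conj_mem_aux' n hn)
    · intro a _; simp
    · intro a _; simp
    · intro a _; simp
  rw [hneg, show Finset.filter (fun x => 0 < x.im) (primitiveRoots n ℂ) = Sset n from rfl,
    ← Finset.prod_mul_distrib]
  apply Finset.prod_congr rfl
  intro z hz
  have hp : IsPrimitiveRoot z n := hprim z (Finset.mem_filter.mp hz).1
  have habs : ‖z‖ = 1 := hp.norm'_eq_one hn0.ne'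
  have h1 : z * starRingEnd ℂ z = 1 := by
    rw [Complex.mul_conj]
    norm_cast
    rw [Complex.normSq_eq_norm_sq, habs]; norm_num
  have h2 : z + starRingEnd ℂ z = 2 * (z.re : ℂ) := by
    rw [Complex.add_conj]; push_cast; ring
  have key : (Polynomial.X - Polynomial.C z) * (Polynomial.X - Polynomial.C (starRingEnd ℂ z))
      = Polynomial.X ^ 2 - Polynomial.C (z + starRingEnd ℂ z) * Polynomial.X
        + Polynomial.C (z * starRingEnd ℂ z) := by
    simp only [Polynomial.C_add, Polynomial.C_mul]; ring
  rw [key, h1, h2, map_one]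

lemma Q_eval (n : ℕ) (hn : 3 ≤ n) :
    MvPolynomial.aeval ![1 + Polynomial.X, (-Polynomial.X : ℝ[X])] (Qbig n)
      = cyclotomic n ℝ := by
  apply Polynomial.map_injective (algebraMap ℝ ℂ) (by
    intro a b hab
    exact_mod_cast hab)
  rw [Polynomial.map_cyclotomic, Qbig, map_prod, Polynomial.map_prod, cyclo_pairs n hn]
  apply Finset.prod_congr rfl
  intro z hz
  rw [map_add, map_mul, map_pow, MvPolynomial.aeval_X, MvPolynomial.aeval_X,
    MvPolynomial.aeval_C]
  simp only [Matrix.cons_val_zero, Matrix.cons_val_one, Matrix.head_cons]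
  have h0 : algebraMap ℝ ℝ[X] (2 + 2 * z.re) = Polynomial.C (2 + 2 * z.re) := rfl
  rw [h0]
  simp only [Polynomial.map_add, Polynomial.map_pow, Polynomial.map_one, Polynomial.map_mul,
    Polynomial.map_neg, Polynomial.map_X, Polynomial.map_C]
  have h1 : ((algebraMap ℝ ℂ) (2 + 2 * z.re)) = (2 + 2 * (z.re:ℂ)) := by push_cast; rfl
  rw [h1, Polynomial.C_add, Polynomial.C_mul]
  simp only [map_ofNat]
  ring


lemma factor_wt (c : ℝ) : ∀ m : Fin 2 →₀ ℕ,
    (MvPolynomial.X 0 ^ 2 + MvPolynomial.C c * MvPolynomial.X 1 :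
      MvPolynomial (Fin 2) ℝ).coeff m ≠ 0 → m 0 + 2 * m 1 = 2 := by
  intro m hm
  rw [MvPolynomial.coeff_add, MvPolynomial.coeff_X_pow, MvPolynomial.coeff_C_mul,
    MvPolynomial.coeff_X'] at hm
  split_ifs at hm with h1 h2 h2 <;>
    first
      | (rw [← h1]; simp [Finsupp.single_apply])
      | (rw [← h2]; simp [Finsupp.single_apply])
      | simp at hm

lemma factor_nonneg (c : ℝ) (hc : 0 ≤ c) : ∀ m : Fin 2 →₀ ℕ,
    0 ≤ (MvPolynomial.X 0 ^ 2 + MvPolynomial.C c * MvPolynomial.X 1 :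
      MvPolynomial (Fin 2) ℝ).coeff m := by
  intro m
  rw [MvPolynomial.coeff_add, MvPolynomial.coeff_X_pow, MvPolynomial.coeff_C_mul,
    MvPolynomial.coeff_X']
  split_ifs <;> simp [hc] <;> positivity

lemma aeval_map_comm (p : MvPolynomial (Fin 2) ℤ) :
    MvPolynomial.aeval ![1 + Polynomial.X, (-Polynomial.X : ℝ[X])]
        (MvPolynomial.map (Int.castRingHom ℝ) p)
      = Polynomial.map (Int.castRingHom ℝ)
          (MvPolynomial.aeval ![1 + Polynomial.X, (-Polynomial.X : ℤ[X])] p) := by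
  induction p using MvPolynomial.induction_on with
  | C a =>
    simp only [MvPolynomial.map_C, MvPolynomial.aeval_C]
    simp [Polynomial.map_intCast]
  | add p q hp hq =>
    simp [hp, hq]
  | mul_X p i hp =>
    simp only [map_mul, MvPolynomial.map_X, MvPolynomial.aeval_X, Polynomial.map_mul, hp]
    congr 1
    fin_cases i <;> simp

end LucasAux

theorem lucas_atom_coeff_nonneg (n : ℕ) (hn : 2 ≤ n) (P : MvPolynomial (Fin 2) ℤ)
    (hform : ∀ m : Fin 2 →₀ ℕ, P.coeff m ≠ 0 → m 0 + 2 * m 1 = Nat.totient n)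
    (heval : MvPolynomial.aeval ![1 + Polynomial.X, -Polynomial.X] P =
      Polynomial.cyclotomic n ℤ) :
    ∀ m : Fin 2 →₀ ℕ, 0 ≤ P.coeff m := by
  -- a "model" polynomial with the desired properties
  obtain ⟨Q, hQw, hQe, hQn⟩ : ∃ Q : MvPolynomial (Fin 2) ℝ,
      (∀ m : Fin 2 →₀ ℕ, Q.coeff m ≠ 0 → m 0 + 2 * m 1 = Nat.totient n) ∧
      (MvPolynomial.aeval ![1 + Polynomial.X, (-Polynomial.X : Polynomial ℝ)] Q =
        Polynomial.cyclotomic n ℝ) ∧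
      (∀ m : Fin 2 →₀ ℕ, 0 ≤ Q.coeff m) := by
    rcases eq_or_lt_of_le hn with rfl | hn3
    · refine ⟨MvPolynomial.X 0, ?_, ?_, ?_⟩
      · intro m hm
        rw [MvPolynomial.coeff_X'] at hm
        split_ifs at hm with h
        · rw [← h]; simp [Finsupp.single_apply, Nat.totient_two]
        · exact absurd rfl hm
      · rw [MvPolynomial.aeval_X, Polynomial.cyclotomic_two]
        simp [add_comm]
      · intro m
        rw [MvPolynomial.coeff_X']
        split_ifs <;> norm_num
    · have hn3' : 3 ≤ n := hn3
      refine ⟨Qbig n, ?_, Q_eval n hn3', ?_⟩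
      · intro m hm
        have := wt_prod (Sset n) _ (fun ζ _ => factor_wt (2 + 2 * ζ.re)) m hm
        rw [this, card_Sset n hn3']
      · apply nonneg_prod
        intro ζ hζ
        apply factor_nonneg
        have hprim : IsPrimitiveRoot ζ n :=
          (mem_primitiveRoots (by omega : 0 < n)).mp (Finset.mem_filter.mp hζ).1
        have habs : ‖ζ‖ = 1 := hprim.norm'_eq_one (by omega)
        have hre : |ζ.re| ≤ 1 := habs ▸ Complex.abs_re_le_norm ζ
        have := abs_le.mp hre
        linarith [this.1]
  -- compare P (mapped to ℝ) with Q
  set Pr : MvPolynomial (Fin 2) ℝ := MvPolynomial.map (Int.castRingHom ℝ) P with hPr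
  have hPc : ∀ m : Fin 2 →₀ ℕ, Pr.coeff m = ((P.coeff m : ℤ) : ℝ) := fun m =>
    MvPolynomial.coeff_map _ _ _
  have hPw : ∀ m : Fin 2 →₀ ℕ, Pr.coeff m ≠ 0 → m 0 + 2 * m 1 = Nat.totient n := by
    intro m hm
    apply hform
    intro h0
    rw [hPc, h0] at hm
    simp at hm
  have hPe : MvPolynomial.aeval ![1 + Polynomial.X, (-Polynomial.X : Polynomial ℝ)] Pr =
      Polynomial.cyclotomic n ℝ := by
    rw [hPr, aeval_map_comm, heval, Polynomial.map_cyclotomic]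
  have hdiff : Pr - Q = 0 := by
    apply inj_lemma (Nat.totient n)
    · intro m hm
      rw [MvPolynomial.coeff_sub] at hm
      rcases eq_or_ne (Pr.coeff m) 0 with h0 | h0
      · exact hQw m (by rw [h0] at hm; simpa using sub_ne_zero.mp (by simpa using hm))
      · exact hPw m h0
    · rw [map_sub, hPe, hQe, sub_self]
  have hPQ : Pr = Q := sub_eq_zero.mp hdiff
  intro m
  have : ((P.coeff m : ℤ) : ℝ) = Q.coeff m := by rw [← hPc, hPQ]
  have hQm := hQn m
  rw [← this] at hQm
  exact_mod_cast hQm
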